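/- For every fibration p : E → B there is a bijection between the normal cleavages of p and the good maps s : E^p → E: the good map associated to a normal cleavage Σ sends an object (e, φ : p(e) → b) of E^p to the codomain of the unique arrow of Σ with domain e lying over φ, and conversely the normal cleavage associated to a good map s is the set of arrows s(id_e, φ) for e an object of E and φ an arrow of B with domain p(e). -/

import Mathlib

open CategoryTheory Simplicial Opposite

namespace DelHoyo

universe w
variable {E B : Type} [SmallCategory E] [SmallCategory B]

/-- An arrow `f : e ⟶ e'` is *cartesian* for `p : E ⥤ B` (in the covariant, cofibred-category
convention of the paper): every `g : e ⟶ e''` lying over `p f` factors uniquely through `f`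
by an arrow lying over the identity of `p e'`. -/
def IsCartArrow (p : E ⥤ B) {e e' : E} (f : e ⟶ e') : Prop :=
  ∀ ⦃e'' : E⦄ (g : e ⟶ e'') (w : p.obj e' = p.obj e''),
    p.map g = p.map f ≫ eqToHom w →
    ∃! h : e' ⟶ e'', p.map h = eqToHom w ∧ f ≫ h = g

/-- `p` is a prefibration: over every arrow `φ` with source `p e` there is a cartesian arrow
with source `e`. -/
def IsPrefibration (p : E ⥤ B) : Prop :=
  ∀ (e : E) (b : B) (φ : p.obj e ⟶ b),
    ∃ (e' : E) (f : e ⟶ e') (w : p.obj e' = b),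
      IsCartArrow p f ∧ p.map f ≫ eqToHom w = φ

/-- `p` is a (Grothendieck, covariant) fibration: a prefibration in which cartesian arrows are
closed under composition. -/
def IsFibration (p : E ⥤ B) : Prop :=
  IsPrefibration p ∧
    ∀ ⦃e e' e'' : E⦄ (f : e ⟶ e') (g : e' ⟶ e''),
      IsCartArrow p f → IsCartArrow p g → IsCartArrow p (f ≫ g)

/-- A cleavage: a set of cartesian arrows containing exactly one arrow with domain `e`
over each arrow `φ : p e ⟶ b`. -/
structure Cleavage (p : E ⥤ B) where
  σ : ∀ ⦃e e' : E⦄, (e ⟶ e') → Prop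
  cart : ∀ ⦃e e' : E⦄ (f : e ⟶ e'), σ f → IsCartArrow p f
  lift : ∀ (e : E) (b : B) (φ : p.obj e ⟶ b),
      ∃ (e' : E) (f : e ⟶ e') (w : p.obj e' = b), σ f ∧ p.map f ≫ eqToHom w = φ
  uniq : ∀ ⦃e e₁ e₂ : E⦄ (f : e ⟶ e₁) (g : e ⟶ e₂) (w : p.obj e₁ = p.obj e₂),
      σ f → σ g → p.map f ≫ eqToHom w = p.map g →
      ∃ h : e₁ = e₂, f ≫ eqToHom h = g

/-- A cleavage is normal if it contains the identities. -/
def Cleavage.IsNormal {p : E ⥤ B} (S : Cleavage p) : Prop := ∀ e : E, S.σ (𝟙 e)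

/-- A cleavage is closed if it is closed under composition. -/
def Cleavage.IsClosed {p : E ⥤ B} (S : Cleavage p) : Prop :=
  ∀ ⦃e e' e'' : E⦄ (f : e ⟶ e') (g : e' ⟶ e''), S.σ f → S.σ g → S.σ (f ≫ g)

/-! ### Weak equivalences -/

/-- A continuous map (in `TopCat`) is a homotopy equivalence. -/
def IsHtpyEquivT {X Y : TopCat} (f : X ⟶ Y) : Prop :=
  ∃ g : Y ⟶ X, ContinuousMap.Homotopic (g.hom.comp f.hom) (ContinuousMap.id X) ∧
                 ContinuousMap.Homotopic (f.hom.comp g.hom) (ContinuousMap.id Y)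

/-- A map of simplicial sets is a weak equivalence if its geometric realization is a
homotopy equivalence. -/
noncomputable def SSetWE {X Y : SSet} (f : X ⟶ Y) : Prop := IsHtpyEquivT (SSet.toTop.map f)

/-- The map of nerves induced by a functor. -/
def nerveMap {C D : Type} [SmallCategory C] [SmallCategory D] (F : C ⥤ D) :
    nerve C ⟶ nerve D where
  app _ := TypeCat.ofHom (fun x => x ⋙ F)
  naturality _ _ _ := rfl

/-- A functor between small categories is a weak equivalence if the induced map of
classifying spaces is a homotopy equivalence. -/
noncomputable def WEqF {C D : Type} [SmallCategory C] [SmallCategory D] (F : C ⥤ D) : Prop :=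
  SSetWE (nerveMap F)

/-! ### Fibers -/

/-- The fiber of `p : E ⥤ B` over `b`: objects over `b`, arrows over `𝟙 b`. -/
structure FibObj (p : E ⥤ B) (b : B) where
  obj : E
  over' : p.obj obj = b

instance fibCategory (p : E ⥤ B) (b : B) : SmallCategory (FibObj p b) where
  Hom X Y := { f : X.obj ⟶ Y.obj // p.map f = eqToHom (X.over'.trans Y.over'.symm) }
  id X := ⟨𝟙 X.obj, by simp⟩
  comp f g := ⟨f.1 ≫ g.1, by rw [Functor.map_comp, f.2, g.2, eqToHom_trans]⟩
  id_comp f := Subtype.ext (Category.id_comp f.1)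
  comp_id f := Subtype.ext (Category.comp_id f.1)
  assoc f g h := Subtype.ext (Category.assoc f.1 g.1 h.1)

/-- The functor induced on fibers by a functor over `B`. -/
def fibMap {E' : Type} [SmallCategory E'] {p : E ⥤ B} {p' : E' ⥤ B}
    (s : E ⥤ E') (hs : s ⋙ p' = p) (b : B) : FibObj p b ⥤ FibObj p' b where
  obj X := ⟨s.obj X.obj, (Functor.congr_obj hs X.obj).trans X.over'⟩
  map {X Y} f := ⟨s.map f.1, by
    have h := Functor.congr_hom hs f.1
    simp only [Functor.comp_map] at h
    rw [h, f.2, eqToHom_trans, eqToHom_trans]⟩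
  map_id X := Subtype.ext (s.map_id X.obj)
  map_comp f g := Subtype.ext (s.map_comp f.1 g.1)

/-! ### The mapping category `E^u` -/

/-- The mapping category `E^u` of a functor `u : A ⟶ B`. -/
structure MapCat {A : Type} [SmallCategory A] (u : A ⥤ B) where
  pt : A
  base : B
  hom : u.obj pt ⟶ base

/-- Morphisms in the mapping category. -/
@[ext] structure MapCatHom {A : Type} [SmallCategory A] {u : A ⥤ B} (X Y : MapCat u) where
  f : X.pt ⟶ Y.pt
  g : X.base ⟶ Y.base
  w : X.hom ≫ g = u.map f ≫ Y.hom

instance mapCatCategory {A : Type} [SmallCategory A] (u : A ⥤ B) :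
    SmallCategory (MapCat u) where
  Hom := MapCatHom
  id X := ⟨𝟙 _, 𝟙 _, by simp⟩
  comp F G := ⟨F.f ≫ G.f, F.g ≫ G.g, by
    rw [← Category.assoc, F.w, Category.assoc, G.w, Functor.map_comp, Category.assoc]⟩
  id_comp F := by apply MapCatHom.ext <;> simp
  comp_id F := by apply MapCatHom.ext <;> simp
  assoc F G H := by apply MapCatHom.ext <;> simp

/-- The canonical inclusion `i : A ⥤ E^u`. -/
def MapCat.incl {A : Type} [SmallCategory A] (u : A ⥤ B) : A ⥤ MapCat u where
  obj a := ⟨a, u.obj a, 𝟙 _⟩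
  map f := ⟨f, u.map f, by simp⟩
  map_id a := MapCatHom.ext rfl (u.map_id a)
  map_comp f g := MapCatHom.ext rfl (u.map_comp f g)

/-- The projection `π : E^u ⥤ B`. -/
def MapCat.proj {A : Type} [SmallCategory A] (u : A ⥤ B) : MapCat u ⥤ B where
  obj X := X.base
  map F := F.g
  map_id _ := rfl
  map_comp _ _ := rfl

/-- The retraction `r : E^u ⥤ A`. -/
def MapCat.retr {A : Type} [SmallCategory A] (u : A ⥤ B) : MapCat u ⥤ A where
  obj X := X.pt
  map F := F.f
  map_id _ := rfl
  map_comp _ _ := rfl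

/-- A *good* map for a fibration `p`: a retraction for `i : E ⥤ E^p` commuting with the
projections to `B` and preserving cartesian arrows. -/
structure GoodMap (p : E ⥤ B) where
  s : MapCat p ⥤ E
  retr : MapCat.incl p ⋙ s = 𝟭 E
  over' : s ⋙ p = MapCat.proj p
  cart : ∀ ⦃X Y : MapCat p⦄ (f : X ⟶ Y),
    IsCartArrow (MapCat.proj p) f → IsCartArrow p (s.map f)

/-- The arrow `(id_e, φ) : (e, id) ⟶ (e, φ)` of `E^u`; these arrows form the canonical
closed cleavage `Σ^u` of `E^u`. -/
def clArrow {A : Type} [SmallCategory A] (u : A ⥤ B) (e : A) {b : B} (φ : u.obj e ⟶ b) :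
    (MapCat.incl u).obj e ⟶ (MapCat.mk e b φ) :=
  ⟨𝟙 e, φ, by
    show 𝟙 (u.obj e) ≫ φ = u.map (𝟙 e) ≫ φ
    simp⟩

/-- The arrow `s(id_e, φ)` of `E`, seen as an arrow with domain `e`. -/
def GoodMap.clv {p : E ⥤ B} (s : GoodMap p) (e : E) {b : B} (φ : p.obj e ⟶ b) :
    e ⟶ s.s.obj (MapCat.mk e b φ) :=
  eqToHom (Functor.congr_obj s.retr e).symm ≫ s.s.map (clArrow p e φ)

/-- Membership in the canonical cleavage `Σ^u` of `E^u`: the first coordinate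
is an identity. -/
def inSigmaU {A : Type} [SmallCategory A] {u : A ⥤ B} {X Y : MapCat u} (g : X ⟶ Y) : Prop :=
  ∃ h : X.pt = Y.pt, g.f = eqToHom h

/-- Normal cleavages, as a type. -/
def NormalCleavage (p : E ⥤ B) := { S : Cleavage p // S.IsNormal }

end DelHoyo

namespace DelHoyo

section Aux

open CategoryTheory

variable {E B : Type} [SmallCategory E] [SmallCategory B] {p : E ⥤ B}

@[simp] theorem mapcat_id_f {A : Type} [SmallCategory A] {u : A ⥤ B} (X : MapCat u) :
    (𝟙 X : X ⟶ X).f = 𝟙 X.pt := rfl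

@[simp] theorem mapcat_id_g {A : Type} [SmallCategory A] {u : A ⥤ B} (X : MapCat u) :
    (𝟙 X : X ⟶ X).g = 𝟙 X.base := rfl

@[simp] theorem mapcat_comp_f {A : Type} [SmallCategory A] {u : A ⥤ B} {X Y Z : MapCat u}
    (F : X ⟶ Y) (G : Y ⟶ Z) : (F ≫ G).f = F.f ≫ G.f := rfl

@[simp] theorem mapcat_comp_g {A : Type} [SmallCategory A] {u : A ⥤ B} {X Y Z : MapCat u}
    (F : X ⟶ Y) (G : Y ⟶ Z) : (F ≫ G).g = F.g ≫ G.g := rfl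

@[simp] theorem proj_obj {A : Type} [SmallCategory A] {u : A ⥤ B} (X : MapCat u) :
    (MapCat.proj u).obj X = X.base := rfl

@[simp] theorem proj_map {A : Type} [SmallCategory A] {u : A ⥤ B} {X Y : MapCat u} (F : X ⟶ Y) :
    (MapCat.proj u).map F = F.g := rfl

@[simp] theorem incl_obj_pt {A : Type} [SmallCategory A] {u : A ⥤ B} (a : A) :
    ((MapCat.incl u).obj a).pt = a := rfl

@[simp] theorem incl_obj_base {A : Type} [SmallCategory A] {u : A ⥤ B} (a : A) :
    ((MapCat.incl u).obj a).base = u.obj a := rfl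

@[simp] theorem incl_obj_hom {A : Type} [SmallCategory A] {u : A ⥤ B} (a : A) :
    ((MapCat.incl u).obj a).hom = 𝟙 (u.obj a) := rfl

@[simp] theorem clArrow_f {A : Type} [SmallCategory A] (u : A ⥤ B) (e : A) {b : B}
    (φ : u.obj e ⟶ b) : (clArrow u e φ).f = 𝟙 e := rfl

@[simp] theorem clArrow_g {A : Type} [SmallCategory A] (u : A ⥤ B) (e : A) {b : B}
    (φ : u.obj e ⟶ b) : (clArrow u e φ).g = φ := rfl

theorem cart_comp_eqToHom {e e' e₂ : E} (f : e ⟶ e') (h : e' = e₂)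
    (hf : IsCartArrow p f) : IsCartArrow p (f ≫ eqToHom h) := by
  subst h; simpa using hf

theorem cart_eqToHom_comp {e₀ e e' : E} (h : e₀ = e) (f : e ⟶ e')
    (hf : IsCartArrow p f) : IsCartArrow p (eqToHom h ≫ f) := by
  subst h; simpa [IsCartArrow] using hf

theorem iso_cart {e e' : E} (f : e ⟶ e') [IsIso f] : IsCartArrow p f := by
  intro e'' g w hg
  refine ⟨inv f ≫ g, ⟨by simp [hg], by simp⟩, ?_⟩
  rintro h ⟨h1, h2⟩
  rw [← h2]; simp

theorem strongCart (hp : IsFibration p) {e e' : E} {f : e ⟶ e'} (hf : IsCartArrow p f)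
    {e'' : E} (g : e ⟶ e'') (ψ : p.obj e' ⟶ p.obj e'') (hg : p.map g = p.map f ≫ ψ) :
    ∃! h : e' ⟶ e'', p.map h = ψ ∧ f ≫ h = g := by
  obtain ⟨z, k, wk, hk, hkc⟩ := hp.1 e' (p.obj e'') ψ
  have hfk : IsCartArrow p (f ≫ k) := hp.2 f k hf hk
  have hgfk : p.map g = p.map (f ≫ k) ≫ eqToHom wk := by
    rw [hg, ← hkc]; simp
  obtain ⟨v, ⟨hv1, hv2⟩, hvu⟩ := hfk g wk hgfk
  refine ⟨k ≫ v, ⟨by rw [Functor.map_comp, hv1, hkc], by rw [← hv2]; simp⟩, ?_⟩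
  rintro h' ⟨h'1, h'2⟩
  obtain ⟨v', ⟨hv'1, hv'2⟩, _⟩ := hk h' wk (by rw [h'1, hkc])
  have hvv : v' = v := hvu v' ⟨hv'1, by rw [Category.assoc, hv'2, h'2]⟩
  rw [← hv'2, hvv]

theorem cart_cancel (hp : IsFibration p) {e e' e'' : E} {f : e ⟶ e'} {h : e' ⟶ e''}
    (hf : IsCartArrow p f) (hfh : IsCartArrow p (f ≫ h)) : IsCartArrow p h := by
  intro z k w hk
  obtain ⟨v, ⟨hv1, hv2⟩, hvu⟩ := hfh (f ≫ k) w (by simp [hk])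
  have key : h ≫ v = k := by
    obtain ⟨u, hu, huu⟩ := strongCart hp hf (f ≫ k) (p.map h ≫ eqToHom w)
      (by simp [hk])
    have e1 : h ≫ v = u := huu _ ⟨by rw [Functor.map_comp, hv1], by
      rw [← Category.assoc, hv2]⟩
    have e2 : k = u := huu _ ⟨hk, rfl⟩
    rw [e1, ← e2]
  refine ⟨v, ⟨hv1, key⟩, ?_⟩
  rintro v' ⟨hv'1, hv'2⟩
  exact hvu v' ⟨hv'1, by rw [Category.assoc, hv'2]⟩

theorem mapcat_cart_of_iso {A : Type} [SmallCategory A] {u : A ⥤ B} {X Y : MapCat u}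
    (F : X ⟶ Y) [IsIso F.f] : IsCartArrow (MapCat.proj u) F := by
  intro Z G w hG
  replace hG : G.g = F.g ≫ eqToHom w := hG
  refine ⟨⟨inv F.f ≫ G.f, eqToHom w, ?_⟩, ⟨rfl, ?_⟩, ?_⟩
  · have w' : Y.base = Z.base := w
    replace hG : G.g = F.g ≫ eqToHom w' := hG
    show Y.hom ≫ eqToHom w' = u.map (inv F.f ≫ G.f) ≫ Z.hom
    calc Y.hom ≫ eqToHom w'
        = inv (u.map F.f) ≫ (u.map F.f ≫ Y.hom) ≫ eqToHom w' := by simp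
      _ = inv (u.map F.f) ≫ (X.hom ≫ F.g) ≫ eqToHom w' := by rw [F.w]
      _ = inv (u.map F.f) ≫ X.hom ≫ G.g := by rw [hG]; simp
      _ = inv (u.map F.f) ≫ u.map G.f ≫ Z.hom := by rw [G.w]
      _ = u.map (inv F.f ≫ G.f) ≫ Z.hom := by simp
  · apply MapCatHom.ext
    · show F.f ≫ inv F.f ≫ G.f = G.f; simp
    · show F.g ≫ eqToHom w = G.g; rw [hG]
  · rintro H ⟨H1, H2⟩
    apply MapCatHom.ext
    · have := congrArg MapCatHom.f H2
      simp only [mapcat_comp_f] at this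
      show H.f = inv F.f ≫ G.f
      rw [← this]; simp
    · exact H1

theorem mapcat_iso_of_cart {A : Type} [SmallCategory A] {u : A ⥤ B} {X Y : MapCat u}
    (F : X ⟶ Y) (hF : IsCartArrow (MapCat.proj u) F) : IsIso F.f := by
  have sq : X.hom ≫ F.g = u.map (𝟙 X.pt) ≫ (X.hom ≫ F.g) := by simp
  obtain ⟨H, ⟨H1, H2⟩, _⟩ := hF (e'' := MapCat.mk X.pt Y.base (X.hom ≫ F.g))
    ⟨𝟙 X.pt, F.g, sq⟩ rfl (by simp)
  have hFf : F.f ≫ H.f = 𝟙 X.pt := by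
    have := congrArg MapCatHom.f H2
    simpa using this
  have sq2 : (X.hom ≫ F.g) ≫ 𝟙 Y.base = u.map F.f ≫ Y.hom := by
    rw [F.w]; simp
  let K : MapCat.mk X.pt Y.base (X.hom ≫ F.g) ⟶ Y := ⟨F.f, 𝟙 Y.base, sq2⟩
  obtain ⟨I, ⟨I1, I2⟩, Iu⟩ := hF (e'' := Y) F rfl (by simp)
  have H1' : H.g = eqToHom (rfl : Y.base = Y.base) := H1
  have hHK : H ≫ K = I := Iu _ ⟨by show H.g ≫ _ = _; rw [H1']; simp; rfl,
    by rw [← Category.assoc, H2]; apply MapCatHom.ext <;> simp [K]⟩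
  have hid : 𝟙 Y = I := Iu _ ⟨by simp; rfl, by simp⟩
  have hHf : H.f ≫ F.f = 𝟙 Y.pt := by
    have := congrArg MapCatHom.f (hHK.trans hid.symm)
    simpa [K] using this
  exact ⟨H.f, hFf, hHf⟩

/-! ### From a normal cleavage to a good map -/

variable (S : Cleavage p)

noncomputable def chObj (X : MapCat p) : E := (S.lift X.pt X.base X.hom).choose

noncomputable def chHom (X : MapCat p) : X.pt ⟶ chObj S X :=
  (S.lift X.pt X.base X.hom).choose_spec.choose

theorem chW (X : MapCat p) : p.obj (chObj S X) = X.base :=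
  (S.lift X.pt X.base X.hom).choose_spec.choose_spec.choose

theorem chSig (X : MapCat p) : S.σ (chHom S X) :=
  (S.lift X.pt X.base X.hom).choose_spec.choose_spec.choose_spec.1

theorem chComm (X : MapCat p) : p.map (chHom S X) ≫ eqToHom (chW S X) = X.hom :=
  (S.lift X.pt X.base X.hom).choose_spec.choose_spec.choose_spec.2

theorem chCart (X : MapCat p) : IsCartArrow p (chHom S X) := S.cart _ (chSig S X)

theorem cMap_aux (hp : IsFibration p) {X Y : MapCat p} (F : X ⟶ Y) :
    ∃! h : chObj S X ⟶ chObj S Y,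
      p.map h = eqToHom (chW S X) ≫ F.g ≫ eqToHom (chW S Y).symm ∧
      chHom S X ≫ h = F.f ≫ chHom S Y := by
  apply strongCart hp (chCart S X)
  calc p.map (F.f ≫ chHom S Y)
      = p.map F.f ≫ Y.hom ≫ eqToHom (chW S Y).symm := by
        rw [Functor.map_comp, ← chComm S Y]; simp
    _ = (X.hom ≫ F.g) ≫ eqToHom (chW S Y).symm := by
        rw [← Category.assoc, F.w, Category.assoc]
    _ = p.map (chHom S X) ≫ eqToHom (chW S X) ≫ F.g ≫ eqToHom (chW S Y).symm := by
        rw [← chComm S X]; simp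

noncomputable def cMap (hp : IsFibration p) {X Y : MapCat p} (F : X ⟶ Y) : chObj S X ⟶ chObj S Y :=
  (cMap_aux S hp F).choose

theorem cMap_over (hp : IsFibration p) {X Y : MapCat p} (F : X ⟶ Y) :
    p.map (cMap S hp F) = eqToHom (chW S X) ≫ F.g ≫ eqToHom (chW S Y).symm :=
  (cMap_aux S hp F).choose_spec.1.1

theorem cMap_fac (hp : IsFibration p) {X Y : MapCat p} (F : X ⟶ Y) :
    chHom S X ≫ cMap S hp F = F.f ≫ chHom S Y :=
  (cMap_aux S hp F).choose_spec.1.2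

theorem cMap_uniq (hp : IsFibration p) {X Y : MapCat p} (F : X ⟶ Y) (h : chObj S X ⟶ chObj S Y)
    (h1 : p.map h = eqToHom (chW S X) ≫ F.g ≫ eqToHom (chW S Y).symm)
    (h2 : chHom S X ≫ h = F.f ≫ chHom S Y) : h = cMap S hp F :=
  (cMap_aux S hp F).choose_spec.2 h ⟨h1, h2⟩

@[reducible] noncomputable def cFun (hp : IsFibration p) : MapCat p ⥤ E where
  obj := chObj S
  map := cMap S hp
  map_id X := by
    symm; apply cMap_uniq S hp
    · simp
    · show chHom S X ≫ 𝟙 (chObj S X) = (𝟙 X : X ⟶ X).f ≫ chHom S X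
      simp
  map_comp {X Y Z} F G := by
    symm; apply cMap_uniq S hp
    · show p.map (cMap S hp F ≫ cMap S hp G) = _
      rw [Functor.map_comp, cMap_over, cMap_over]; simp
    · show chHom S X ≫ cMap S hp F ≫ cMap S hp G = (F ≫ G).f ≫ chHom S Z
      rw [← Category.assoc, cMap_fac, Category.assoc, cMap_fac, mapcat_comp_f,
        Category.assoc]

theorem sigma_comp_eqToHom {e e₁ e₂ : E} {f : e ⟶ e₁} (h : e₁ = e₂)
    (hf : S.σ f) : S.σ (f ≫ eqToHom h) := by subst h; simpa using hf

theorem robj_aux (hS : S.IsNormal) (e : E) :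
    ∃ h : chObj S ((MapCat.incl p).obj e) = e,
      chHom S ((MapCat.incl p).obj e) ≫ eqToHom h = 𝟙 e := by
  apply S.uniq _ _ (chW S ((MapCat.incl p).obj e)) (chSig S _) (hS e)
  have h := chComm S ((MapCat.incl p).obj e)
  simpa using h

theorem robj (hS : S.IsNormal) (e : E) : chObj S ((MapCat.incl p).obj e) = e := (robj_aux S hS e).choose

theorem rhom (hS : S.IsNormal) (e : E) :
    chHom S ((MapCat.incl p).obj e) ≫ eqToHom (robj S hS e) = 𝟙 e :=
  (robj_aux S hS e).choose_spec

theorem chHom_incl (hS : S.IsNormal) (e : E) :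
    chHom S ((MapCat.incl p).obj e) = eqToHom (robj S hS e).symm := by
  have h := (comp_eqToHom_iff _ _ _).mp (rhom S hS e)
  exact h.trans (Category.id_comp _)

@[reducible] noncomputable def cGood (hp : IsFibration p) (hS : S.IsNormal) : GoodMap p where
  s := cFun S hp
  retr := by
    have hobj : ∀ e : E, (MapCat.incl p ⋙ cFun S hp).obj e = (𝟭 E).obj e :=
      fun e => robj S hS e
    refine CategoryTheory.Functor.ext hobj ?_
    intro e e' f
    show cMap S hp ((MapCat.incl p).map f) = _
    symm; apply cMap_uniq S hp
    · simp [eqToHom_map]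
      show eqToHom _ ≫ p.map f ≫ eqToHom _ = eqToHom _ ≫ p.map f ≫ eqToHom _
      congr 1
    · rw [chHom_incl S hS, chHom_incl S hS]
      show eqToHom _ ≫ eqToHom _ ≫ f ≫ eqToHom _ = f ≫ eqToHom _
      simp
  over' := by
    have hobj : ∀ X : MapCat p, (cFun S hp ⋙ p).obj X = (MapCat.proj p).obj X :=
      fun X => chW S X
    refine CategoryTheory.Functor.ext hobj ?_
    intro X Y F
    show p.map (cMap S hp F) = _
    rw [cMap_over]
    rfl
  cart := by
    intro X Y F hF
    haveI := mapcat_iso_of_cart F hF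
    have hc2 : IsCartArrow p (F.f ≫ chHom S Y) := hp.2 _ _ (iso_cart _) (chCart S Y)
    exact cart_cancel hp (chCart S X) (by show IsCartArrow p (chHom S X ≫ cMap S hp F); rw [cMap_fac]; exact hc2)

theorem cGood_clv (hp : IsFibration p) (hS : S.IsNormal) (e : E) (b : B) (φ : p.obj e ⟶ b) :
    (cGood S hp hS).clv e φ = chHom S (MapCat.mk e b φ) := by
  have h1 : chHom S ((MapCat.incl p).obj e) ≫ cMap S hp (clArrow p e φ)
      = 𝟙 e ≫ chHom S (MapCat.mk e b φ) := by
    rw [cMap_fac]; rfl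
  rw [chHom_incl S hS, Category.id_comp] at h1
  exact h1

/-! ### From a good map to a normal cleavage -/

theorem eqToHom_aux5 {C : Type*} [Category C] {a x a' y : C} (h1 : a = x) (h2 : x = a)
    (f : a ⟶ a') (h3 : a' = y) (h4 : y = a') :
    eqToHom h1 ≫ eqToHom h2 ≫ f ≫ eqToHom h3 ≫ eqToHom h4 = f := by
  subst h1 h3; simp

theorem eqToHom_aux6 {C : Type*} [Category C] {a x b b' y a' : C} (h1 : a = x) (h2 : x = b)
    (g : b ⟶ b') (h3 : b' = y) (h4 : y = a') (h5 : a = b) (h6 : b' = a') :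
    eqToHom h1 ≫ eqToHom h2 ≫ g ≫ eqToHom h3 ≫ eqToHom h4 = eqToHom h5 ≫ g ≫ eqToHom h6 := by
  subst h1 h2 h3 h4; simp

theorem eqToHom_aux3 {C : Type*} [Category C] {a x : C} (h1 : a = x) (h2 : x = a)
    (g : x ⟶ x) (hg : g = 𝟙 x) : (eqToHom h1 ≫ g) ≫ eqToHom h2 = 𝟙 a := by
  subst hg h1; simp

theorem ws (s : GoodMap p) (X : MapCat p) : p.obj (s.s.obj X) = X.base :=
  Functor.congr_obj s.over' X

theorem clv_over (s : GoodMap p) (e : E) {b : B} (φ : p.obj e ⟶ b) :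
    p.map (s.clv e φ) ≫ eqToHom (ws s (MapCat.mk e b φ)) = φ := by
  have h := Functor.congr_hom s.over' (clArrow p e φ)
  simp only [Functor.comp_map] at h
  show p.map (eqToHom _ ≫ s.s.map (clArrow p e φ)) ≫ _ = φ
  rw [Functor.map_comp, h]
  simp [eqToHom_map]
  exact eqToHom_aux5 _ _ _ _ _

theorem clv_over' (s : GoodMap p) (e : E) {b : B} (φ : p.obj e ⟶ b) :
    p.map (s.clv e φ) = φ ≫ eqToHom (ws s (MapCat.mk e b φ)).symm :=
  (comp_eqToHom_iff _ _ _).mp (clv_over s e φ)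

noncomputable def gClv (s : GoodMap p) : Cleavage p where
  σ := fun e e' f => ∃ (b : B) (φ : p.obj e ⟶ b)
    (h : s.s.obj (MapCat.mk e b φ) = e'), s.clv e φ ≫ eqToHom h = f
  cart := by
    rintro e e' f ⟨b, φ, h, rfl⟩
    haveI : IsIso (clArrow p e φ).f := inferInstanceAs (IsIso (𝟙 e))
    exact cart_comp_eqToHom _ h (cart_eqToHom_comp _ _
      (s.cart _ (mapcat_cart_of_iso (clArrow p e φ))))
  lift := fun e b φ =>
    ⟨s.s.obj (MapCat.mk e b φ), s.clv e φ, ws s _,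
      ⟨b, φ, rfl, by simp⟩, clv_over s e φ⟩
  uniq := by
    rintro e e₁ e₂ f g w ⟨b₁, φ₁, h₁, rfl⟩ ⟨b₂, φ₂, h₂, rfl⟩ hw
    subst h₁; subst h₂
    have hb : b₁ = b₂ :=
      (ws s (MapCat.mk e b₁ φ₁)).symm.trans (w.trans (ws s (MapCat.mk e b₂ φ₂)))
    subst hb
    have hφ : φ₁ = φ₂ := by
      rw [Functor.map_comp, Functor.map_comp, eqToHom_map, eqToHom_map,
        clv_over' s, clv_over' s] at hw
      simp only [Category.assoc, eqToHom_trans] at hw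
      rw [comp_eqToHom_iff] at hw
      simpa using hw
    subst hφ
    exact ⟨rfl, by simp⟩

theorem gClv_normal (s : GoodMap p) : (gClv s).IsNormal := by
  intro e
  refine ⟨p.obj e, 𝟙 (p.obj e), Functor.congr_obj s.retr e, ?_⟩
  have hcl : clArrow p e (𝟙 (p.obj e)) = 𝟙 ((MapCat.incl p).obj e) :=
    MapCatHom.ext rfl rfl
  show (eqToHom _ ≫ s.s.map (clArrow p e (𝟙 (p.obj e)))) ≫ eqToHom _ = 𝟙 e
  exact eqToHom_aux3 _ _ _ ((congrArg (fun k => s.s.map k) hcl).trans (s.s.map_id _))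

theorem clv_natural (s : GoodMap p) {X Y : MapCat p} (F : X ⟶ Y) :
    s.clv X.pt X.hom ≫ s.s.map F = F.f ≫ s.clv Y.pt Y.hom := by
  have key : clArrow p X.pt X.hom ≫ F = (MapCat.incl p).map F.f ≫ clArrow p Y.pt Y.hom := by
    apply MapCatHom.ext
    · show 𝟙 X.pt ≫ F.f = F.f ≫ 𝟙 Y.pt; simp
    · show X.hom ≫ F.g = p.map F.f ≫ Y.hom; exact F.w
  have hmap := Functor.congr_hom s.retr F.f
  simp only [Functor.comp_map, Functor.id_map] at hmap
  show (eqToHom _ ≫ s.s.map (clArrow p X.pt X.hom)) ≫ s.s.map F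
      = F.f ≫ eqToHom _ ≫ s.s.map (clArrow p Y.pt Y.hom)
  rw [Category.assoc, ← Functor.map_comp, key, Functor.map_comp, hmap]
  simp

/-! ### The two composites -/

theorem Cleavage.ext' {S T : Cleavage p} (h : S.σ = T.σ) : S = T := by
  cases S; cases T; cases h; rfl

theorem GoodMap.ext' {g₁ g₂ : GoodMap p} (h : g₁.s = g₂.s) : g₁ = g₂ := by
  cases g₁; cases g₂; cases h; rfl

theorem cleavage_left (hp : IsFibration p) (hS : S.IsNormal) : gClv (cGood S hp hS) = S := by
  apply Cleavage.ext'
  funext e e' f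
  apply propext
  constructor
  · rintro ⟨b, φ, h, rfl⟩
    rw [cGood_clv S hp hS e b φ]
    exact sigma_comp_eqToHom S h (chSig S _)
  · intro hf
    obtain ⟨h, hh⟩ := S.uniq (chHom S (MapCat.mk e (p.obj e') (p.map f))) f
      (chW S (MapCat.mk e (p.obj e') (p.map f))) (chSig S _) hf (chComm S _)
    exact ⟨p.obj e', p.map f, h, by rw [cGood_clv S hp hS]; exact hh⟩

theorem right_aux (s : GoodMap p) (X : MapCat p) :
    ∃ h : s.s.obj X = chObj (gClv s) X,
      s.clv X.pt X.hom ≫ eqToHom h = chHom (gClv s) X := by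
  obtain ⟨b, φ, h, hh⟩ := chSig (gClv s) X
  have hb : b = X.base :=
    (ws s (MapCat.mk X.pt b φ)).symm.trans ((congrArg p.obj h).trans (chW (gClv s) X))
  subst hb
  have hφ : φ = X.hom := by
    have hc := chComm (gClv s) X
    rw [← hh, Functor.map_comp, eqToHom_map, clv_over' s] at hc
    simpa using hc
  subst hφ
  exact ⟨h, hh⟩

theorem goodmap_right (hp : IsFibration p) (s : GoodMap p) :
    cGood (gClv s) hp (gClv_normal s) = s := by
  apply GoodMap.ext'
  have hobj : ∀ X : MapCat p, (cFun (gClv s) hp).obj X = s.s.obj X :=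
    fun X => (right_aux s X).choose.symm
  refine CategoryTheory.Functor.ext hobj ?_
  intro X Y F
  show cMap (gClv s) hp F = _
  symm; apply cMap_uniq (gClv s) hp
  · have hsf := Functor.congr_hom s.over' F
    simp only [Functor.comp_map] at hsf
    rw [Functor.map_comp, Functor.map_comp, eqToHom_map, eqToHom_map, hsf]
    simp
    exact eqToHom_aux6 _ _ _ _ _ _ _
  · rw [← (right_aux s X).choose_spec, ← (right_aux s Y).choose_spec]
    have hn := clv_natural s F
    have hid : eqToHom (right_aux s X).choose ≫ eqToHom (hobj X) = 𝟙 (s.s.obj X) := by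
      simp
    have hid' : ∀ {Z : E} (k : s.s.obj X ⟶ Z),
        eqToHom (right_aux s X).choose ≫ eqToHom (hobj X) ≫ k = k := by
      intro Z k; rw [← Category.assoc, hid, Category.id_comp]
    rw [Category.assoc, hid', ← Category.assoc, hn, Category.assoc]

end Aux

end DelHoyo

open CategoryTheory in
/-- the bijection between normal cleavages of `p` and good maps `E^p ⥤ E`.
The good map associated to `Σ` sends `(e, φ)` to the codomain of the unique arrow of `Σ`
with domain `e` over `φ`, and the cleavage associated to a good map `s` consists of the
arrows `s(id_e, φ)`. -/
theorem DelHoyo.stmt4 {E B : Type} [SmallCategory E] [SmallCategory B]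
    (p : E ⥤ B) (hp : IsFibration p) :
    ∃ eqv : NormalCleavage p ≃ GoodMap p,
      (∀ (S : NormalCleavage p) (X : MapCat p),
        ∃ f : X.pt ⟶ (eqv S).s.obj X, S.1.σ f ∧
          ∃ w : p.obj ((eqv S).s.obj X) = X.base, p.map f ≫ eqToHom w = X.hom) ∧
      (∀ (s : GoodMap p) (e : E) (b : B) (φ : p.obj e ⟶ b),
        (eqv.symm s).1.σ (s.clv e φ)) := by
  classical
  refine ⟨⟨fun S => cGood S.1 hp S.2, fun s => ⟨gClv s, gClv_normal s⟩, ?_, ?_⟩, ?_, ?_⟩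
  · intro S
    exact Subtype.ext (cleavage_left S.1 hp S.2)
  · intro s
    exact goodmap_right hp s
  · intro S X
    exact ⟨chHom S.1 X, chSig S.1 X, chW S.1 X, chComm S.1 X⟩
  · intro s e b φ
    exact ⟨b, φ, rfl, by simp⟩
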